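/- Suppose the mixed strategy profile x = (x^1,…,x^n), reals ū^i, and for each player i and s ∈ S_i reals u^i_s, r^i_s and b^i_s ∈ {0,1} satisfy all MIMLP1 constraints: u^i_s = u_i(s, x); ū^i ≥ u^i_s; r^i_s = ū^i − u^i_s; r^i_s ≥ 0; x^i(s) ≤ 1 − b^i_s; and r^i_s ≤ U^i b^i_s, for all i and s ∈ S_i. Then x is a Nash equilibrium. -/
import Mathlib


open Finset

/-- Expected payoff `U_i(x)` of player `i` under the mixed strategy profile `x`. -/
def expPayoff {n : ℕ} {S : Fin n → Type} [∀ i, Fintype (S i)]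
    (A : Fin n → (∀ j, S j) → ℝ) (x : ∀ i, S i → ℝ) (i : Fin n) : ℝ :=
  ∑ t : ∀ j, S j, A i t * ∏ j, x j (t j)

/-- Expected payoff `u_i(s, x)` of player `i` playing the pure strategy `s` while the
other players play their mixed strategies from `x`: summing over full pure profiles `t`
with `t i = s` is the same as summing over tuples `ŝ` of pure strategies of the others. -/
def purePayoff {n : ℕ} {S : Fin n → Type} [∀ i, Fintype (S i)] [∀ i, DecidableEq (S i)]
    (A : Fin n → (∀ j, S j) → ℝ) (x : ∀ i, S i → ℝ) (i : Fin n) (s : S i) : ℝ :=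
  ∑ t : ∀ j, S j, if t i = s then A i t * ∏ j ∈ Finset.univ.erase i, x j (t j) else 0

/-- `U^i`: the maximum difference of any two payoffs of player `i`. -/
noncomputable def payoffRange {n : ℕ} {S : Fin n → Type} [∀ i, Fintype (S i)]
    [∀ i, Nonempty (S i)] (A : Fin n → (∀ j, S j) → ℝ) (i : Fin n) : ℝ :=
  Finset.univ.sup' Finset.univ_nonempty (A i) - Finset.univ.inf' Finset.univ_nonempty (A i)

lemma expPayoff_update {n : ℕ} {S : Fin n → Type} [∀ i, Fintype (S i)]
    [∀ i, DecidableEq (S i)] (A : Fin n → (∀ j, S j) → ℝ) (x : ∀ i, S i → ℝ)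
    (i : Fin n) (y : S i → ℝ) :
    expPayoff A (Function.update x i y) i = ∑ s, y s * purePayoff A x i s := by
  unfold expPayoff purePayoff
  simp_rw [Finset.mul_sum, mul_ite, mul_zero]
  rw [Finset.sum_comm]
  apply Finset.sum_congr rfl
  intro t _
  rw [Finset.sum_ite_eq Finset.univ (t i) (fun s => y s * (A i t * ∏ j ∈ univ.erase i, x j (t j))),
    if_pos (Finset.mem_univ _)]
  rw [← Finset.mul_prod_erase Finset.univ _ (Finset.mem_univ i), Function.update_self]
  rw [Finset.prod_congr rfl (fun j hj => by
      rw [Function.update_of_ne (Finset.ne_of_mem_erase hj)])]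
  ring

/-- If the mixed strategy profile `x` together with `ū^i`, `u^i_s`,
`r^i_s` and binary `b^i_s` satisfies all MIMLP1 constraints, then `x` is a Nash
equilibrium. -/
theorem mimlp1_feasible_gives_nash
    (n : ℕ) (hn : 2 ≤ n) (S : Fin n → Type)
    [∀ i, Fintype (S i)] [∀ i, Nonempty (S i)] [∀ i, DecidableEq (S i)]
    (A : Fin n → (∀ j, S j) → ℝ)
    (x : ∀ i, S i → ℝ)
    (hx0 : ∀ i s, 0 ≤ x i s) (hx1 : ∀ i, ∑ s, x i s = 1)
    (ubar : Fin n → ℝ) (u r b : ∀ i, S i → ℝ)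
    (hfeas : ∀ (i : Fin n) (s : S i),
        (b i s = 0 ∨ b i s = 1) ∧
        u i s = purePayoff A x i s ∧
        u i s ≤ ubar i ∧
        r i s = ubar i - u i s ∧
        0 ≤ r i s ∧
        x i s ≤ 1 - b i s ∧
        r i s ≤ payoffRange A i * b i s) :
    ∀ (i : Fin n) (y : S i → ℝ), (∀ s, 0 ≤ y s) → ∑ s, y s = 1 →
      expPayoff A (Function.update x i y) i ≤ expPayoff A x i := by
  intro i y hy0 hy1
  have hx_eq : expPayoff A x i = ∑ s, x i s * purePayoff A x i s := by
    rw [← expPayoff_update A x i (x i), Function.update_eq_self]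
  -- support strategies achieve ubar i
  have hsupp : ∀ s : S i, x i s ≠ 0 → purePayoff A x i s = ubar i := by
    intro s hs
    obtain ⟨hb, hu, hle, hr, hr0, hxb, hrb⟩ := hfeas i s
    have hb0 : b i s = 0 := by
      rcases hb with h | h
      · exact h
      · exfalso
        have := hxb
        rw [h] at this
        exact hs (le_antisymm (by linarith) (hx0 i s))
    have : r i s = 0 := le_antisymm (by rw [hb0, mul_zero] at hrb; exact hrb) hr0
    rw [← hu]
    linarith [hr ▸ this]
  have h1 : expPayoff A x i = ubar i := by
    rw [hx_eq]
    have : ∀ s ∈ (Finset.univ : Finset (S i)), x i s * purePayoff A x i s = x i s * ubar i := by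
      intro s _
      by_cases h : x i s = 0
      · rw [h]; ring
      · rw [hsupp s h]
    rw [Finset.sum_congr rfl this, ← Finset.sum_mul, hx1 i, one_mul]
  rw [expPayoff_update, h1]
  calc ∑ s, y s * purePayoff A x i s ≤ ∑ s, y s * ubar i := by
        apply Finset.sum_le_sum
        intro s _
        have := (hfeas i s).2.2.1
        rw [(hfeas i s).2.1] at this
        exact mul_le_mul_of_nonneg_left this (hy0 s)
    _ = ubar i := by rw [← Finset.sum_mul, hy1, one_mul]
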